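/- arXiv:1509.00916 — 2 statements merged into one kernel-verified Lean document; each statement's English description precedes it below -/
import Mathlib

section
/- Let G = (V, E) be a finite simple graph, E1 ⊆ E, and let G' be obtained from G by subdividing each edge of E1 twice. If G has a vertex cover of size at most s, then G' has a vertex cover of size at most s + |E1|. -/
open SimpleGraph Finset

/-- The type of new vertices added when each edge of `E1` is subdivided twice:
for an edge `e = {u, v} ∈ E1`, the ordered pair `(u, v)` represents the new vertex
`v'_{e,u}` (the one adjacent to `u`), and `(v, u)` represents `v'_{e,v}`. -/
abbrev NewVert (V : Type*) (E1 : Finset (Sym2 V)) : Type _ :=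
  {p : V × V // s(p.1, p.2) ∈ E1 ∧ p.1 ≠ p.2}

/-- The graph `G'` obtained from `G` by subdividing each edge of `E1` twice:
an edge `e = {u, v} ∈ E1` is replaced by the path `u — v'_{e,u} — v'_{e,v} — v`,
and edges not in `E1` are kept unchanged. -/
def subdivide {V : Type*} (G : SimpleGraph V) (E1 : Finset (Sym2 V)) :
    SimpleGraph (V ⊕ NewVert V E1) where
  Adj x y :=
    match x, y with
    | Sum.inl u, Sum.inl w => G.Adj u w ∧ s(u, w) ∉ E1
    | Sum.inl u, Sum.inr p => u = p.val.1
    | Sum.inr p, Sum.inl u => u = p.val.1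
    | Sum.inr p, Sum.inr q => p.val.1 = q.val.2 ∧ p.val.2 = q.val.1
  symm := by
    constructor
    rintro (u | p) (w | q) h
    · exact ⟨h.1.symm, fun hc => h.2 (by rwa [Sym2.eq_swap] at hc)⟩
    · exact h
    · exact h
    · exact ⟨h.2.symm, h.1.symm⟩
  loopless := by
    constructor
    rintro (u | p) h
    · exact G.loopless.irrefl u h.1
    · exact p.prop.2 h.1

/-- A set `S` of vertices is a vertex cover of `G` if every edge of `G` has at
least one endpoint in `S`. -/
def IsVertexCover {W : Type*} (H : SimpleGraph W) (S : Set W) : Prop :=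
  ∀ ⦃u v : W⦄, H.Adj u v → u ∈ S ∨ v ∈ S

/-- If `G` has a vertex cover of size at most `s`, then the graph `G'`
obtained from `G` by subdividing each edge of `E1 ⊆ E(G)` twice has a vertex cover of
size at most `s + |E1|`. -/
theorem statement3 {V : Type*} [Fintype V] [DecidableEq V] (G : SimpleGraph V)
    [DecidableRel G.Adj] (E1 : Finset (Sym2 V)) (hE1 : E1 ⊆ G.edgeFinset) (s : ℕ)
    (hcover : ∃ S : Finset V, _root_.IsVertexCover G ↑S ∧ S.card ≤ s) :
    ∃ S' : Finset (V ⊕ NewVert V E1),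
      _root_.IsVertexCover (subdivide G E1) ↑S' ∧ S'.card ≤ s + E1.card := by
  classical
  obtain ⟨S, hS, hScard⟩ := hcover
  -- For each edge in E1, pick an endpoint that lies in S.
  have hpick : ∀ e ∈ E1, ∃ w, w ∈ S ∧ w ∈ e := by
    intro e he
    induction e with
    | h u v =>
      have hadj : G.Adj u v := by
        rw [← SimpleGraph.mem_edgeSet, ← SimpleGraph.mem_edgeFinset]
        exact hE1 he
      rcases hS hadj with h | h
      · exact ⟨u, h, Sym2.mem_mk_left u v⟩
      · exact ⟨v, h, Sym2.mem_mk_right u v⟩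
  let pick : Sym2 V → V := fun e =>
    if h : e ∈ E1 then (hpick e h).choose else (Quot.out e).1
  have hpickS : ∀ e ∈ E1, pick e ∈ S ∧ pick e ∈ e := by
    intro e he
    simp only [pick, dif_pos he]
    exact (hpick e he).choose_spec
  let T : Finset (NewVert V E1) :=
    Finset.univ.filter (fun p => pick s(p.val.1, p.val.2) = p.val.2)
  have hmemS : ∀ u : V, u ∈ S →
      Sum.inl u ∈ ((S.image Sum.inl ∪ T.image Sum.inr : Finset (V ⊕ NewVert V E1)) : Set (V ⊕ NewVert V E1)) := by
    intro u hu
    rw [Finset.mem_coe]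
    exact Finset.mem_union_left _ (Finset.mem_image_of_mem _ hu)
  have hmemT : ∀ p : NewVert V E1, p ∈ T →
      Sum.inr p ∈ ((S.image Sum.inl ∪ T.image Sum.inr : Finset (V ⊕ NewVert V E1)) : Set (V ⊕ NewVert V E1)) := by
    intro p hp
    rw [Finset.mem_coe]
    exact Finset.mem_union_right _ (Finset.mem_image_of_mem _ hp)
  refine ⟨S.image Sum.inl ∪ T.image Sum.inr, ?_, ?_⟩
  · rintro (u | p) (w | q) hadj
    · rcases hS hadj.1 with h | h
      · exact Or.inl (hmemS u h)
      · exact Or.inr (hmemS w h)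
    · -- u = q.val.1
      have hu : u = q.val.1 := hadj
      subst hu
      have he := q.prop.1
      obtain ⟨h1, h2⟩ := hpickS _ he
      rw [Sym2.mem_iff] at h2
      rcases h2 with h2 | h2
      · exact Or.inl (hmemS _ (h2 ▸ h1))
      · exact Or.inr (hmemT q (by simp [T, h2]))
    · have hw : w = p.val.1 := hadj
      subst hw
      have he := p.prop.1
      obtain ⟨h1, h2⟩ := hpickS _ he
      rw [Sym2.mem_iff] at h2
      rcases h2 with h2 | h2
      · exact Or.inr (hmemS _ (h2 ▸ h1))
      · exact Or.inl (hmemT p (by simp [T, h2]))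
    · -- middle edge: p.1 = q.2, p.2 = q.1
      obtain ⟨ha, hb⟩ := hadj
      have he := p.prop.1
      obtain ⟨h1, h2⟩ := hpickS _ he
      rw [Sym2.mem_iff] at h2
      rcases h2 with h2 | h2
      · refine Or.inr (hmemT q ?_)
        simp only [T, Finset.mem_filter, Finset.mem_univ, true_and]
        have heq : s(q.val.1, q.val.2) = s(p.val.1, p.val.2) := by
          rw [ha, hb, Sym2.eq_swap]
        rw [heq, h2, ha]
      · exact Or.inl (hmemT p (by simp [T, h2]))
  · calc (S.image Sum.inl ∪ T.image Sum.inr).card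
        ≤ (S.image Sum.inl).card + (T.image Sum.inr).card := Finset.card_union_le _ _
      _ ≤ s + E1.card := by
          gcongr
          · exact le_trans (Finset.card_image_le) hScard
          · refine le_trans (Finset.card_image_le) ?_
            refine Finset.card_le_card_of_injOn (fun p => s(p.val.1, p.val.2)) ?_ ?_
            · intro p _; exact p.prop.1
            · intro p hp q hq hpq
              rw [Finset.mem_coe] at hp hq
              simp only [T, Finset.mem_filter, Finset.mem_univ, true_and] at hp hq
              simp only at hpq
              have h2 : p.val.2 = q.val.2 := by rw [← hp, ← hq, hpq]
              rw [Sym2.mk_eq_mk_iff] at hpq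
              rcases hpq with h | h
              · exact Subtype.ext (Prod.ext (congrArg Prod.fst h) h2)
              · exfalso
                have h1 : p.val.1 = q.val.2 := (Prod.ext_iff.mp h).1
                exact p.prop.2 (by rw [h1, ← h2])
end

section
/- Let G be a 4-regular finite simple graph on n vertices, let E(G) = E1 ∪ E2 be a partition of its edge set with |E1| = |E2| = n such that (V(G), E2) is bipartite, and let G' be the graph (with 3n vertices, identified with {1,…,3n}, and 4n edges) obtained from G by subdividing each edge of E1 twice. If G has a vertex cover of size at most s with s ≤ n, then, setting k = s + n, the edge set of G' admits a partition into k parts whose total cost is at most 3n − s. -/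
open SimpleGraph Finset

/-- For a graph on vertex set `Fin N`, the edge `e = {i, j}` is identified with the
point `x_e = b_i + b_j` in `ℝ^N`, where `b_i` is the `i`-th standard basis vector. -/
noncomputable def edgePoint (N : ℕ) (e : Sym2 (Fin N)) : EuclideanSpace ℝ (Fin N) :=
  Sym2.lift ⟨fun i j => EuclideanSpace.single i (1 : ℝ) + EuclideanSpace.single j (1 : ℝ),
    fun _ _ => add_comm _ _⟩ e

/-- The (k-means) cost of a finite set `C` of edges:
`cost(C) = inf_{c ∈ ℝ^N} Σ_{e ∈ C} ‖x_e − c‖²`. -/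
noncomputable def cost (N : ℕ) (C : Finset (Sym2 (Fin N))) : ℝ :=
  ⨅ c : EuclideanSpace ℝ (Fin N), ∑ e ∈ C, ‖edgePoint N e - c‖ ^ 2

/-- swap of a new vertex -/
def swapNV {V : Type*} {E1 : Finset (Sym2 V)} (p : NewVert V E1) : NewVert V E1 :=
  ⟨(p.val.2, p.val.1), ⟨by rw [Sym2.eq_swap]; exact p.prop.1, p.prop.2.symm⟩⟩

/-- pick a vertex of an edge, preferring one in `S` -/
noncomputable def pickS {V : Type*} [DecidableEq V] (S : Finset V) (e : Sym2 V) : V :=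
  if (Quot.out e).1 ∈ S then (Quot.out e).1 else (Quot.out e).2

noncomputable def centerFun {V : Type*} [DecidableEq V] (E1 : Finset (Sym2 V)) (S : Finset V) :
    (V ⊕ NewVert V E1) → (V ⊕ NewVert V E1) → V ⊕ Sym2 V
  | Sum.inl u, Sum.inl w => Sum.inl (pickS S s(u, w))
  | Sum.inl _, Sum.inr p => if p.val.1 ∈ S then Sum.inl p.val.1 else Sum.inr s(p.val.1, p.val.2)
  | Sum.inr p, Sum.inl _ => if p.val.1 ∈ S then Sum.inl p.val.1 else Sum.inr s(p.val.1, p.val.2)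
  | Sum.inr p, Sum.inr q => Sum.inr s(p.val.1, q.val.1)

lemma centerFun_symm {V : Type*} [DecidableEq V] (E1 : Finset (Sym2 V)) (S : Finset V) :
    ∀ x y, centerFun E1 S x y = centerFun E1 S y x := by
  rintro (u | p) (w | q)
  · show Sum.inl (pickS S s(u, w)) = Sum.inl (pickS S s(w, u))
    rw [Sym2.eq_swap]
  · rfl
  · rfl
  · show Sum.inr s(p.val.1, q.val.1) = Sum.inr s(q.val.1, p.val.1)
    rw [Sym2.eq_swap]

noncomputable def centerS {V : Type*} [DecidableEq V] (E1 : Finset (Sym2 V)) (S : Finset V) :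
    Sym2 (V ⊕ NewVert V E1) → V ⊕ Sym2 V :=
  Sym2.lift ⟨centerFun E1 S, centerFun_symm E1 S⟩

lemma centerS_mk {V : Type*} [DecidableEq V] (E1 : Finset (Sym2 V)) (S : Finset V)
    (x y : V ⊕ NewVert V E1) : centerS E1 S s(x, y) = centerFun E1 S x y := rfl

lemma sum_sq_dist_mean {N : ℕ} (U : Finset (Fin N)) (hU : U.Nonempty) :
    ∑ u ∈ U, ‖EuclideanSpace.single u (1:ℝ) -
      (U.card : ℝ)⁻¹ • ∑ w ∈ U, EuclideanSpace.single w (1:ℝ)‖ ^ 2 = (U.card : ℝ) - 1 := by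
  have hcpos : 0 < U.card := Finset.card_pos.mpr hU
  have hm0 : (U.card : ℝ) ≠ 0 := by exact_mod_cast hcpos.ne'
  set T : EuclideanSpace ℝ (Fin N) := ∑ w ∈ U, EuclideanSpace.single w (1:ℝ) with hT
  have h1 : ∀ u ∈ U, (inner ℝ (EuclideanSpace.single u (1:ℝ)) T : ℝ) = 1 := by
    intro u hu
    rw [hT, inner_sum]
    have hterm : ∀ w ∈ U, (inner ℝ (EuclideanSpace.single u (1:ℝ))
        (EuclideanSpace.single w (1:ℝ)) : ℝ) = if u = w then 1 else 0 := by
      intro w _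
      rw [EuclideanSpace.inner_single_left, EuclideanSpace.single_apply]
      simp [eq_comm]
    rw [Finset.sum_congr rfl hterm, Finset.sum_ite_eq U u (fun _ => (1:ℝ)), if_pos hu]
  have hTT : (inner ℝ T T : ℝ) = (U.card : ℝ) := by
    rw [hT, sum_inner]
    rw [Finset.sum_congr rfl (fun u hu => h1 u hu), Finset.sum_const, nsmul_eq_mul, mul_one]
  have key : ∀ u ∈ U, ‖EuclideanSpace.single u (1:ℝ) - (U.card : ℝ)⁻¹ • T‖ ^ 2
      = 1 - 2 * (U.card : ℝ)⁻¹ + (U.card : ℝ)⁻¹ := by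
    intro u hu
    rw [norm_sub_sq_real, real_inner_smul_right, h1 u hu, norm_smul]
    have hT2 : ‖T‖ ^ 2 = (U.card : ℝ) := by rw [← real_inner_self_eq_norm_sq, hTT]
    rw [EuclideanSpace.norm_single, mul_pow, hT2]
    rw [Real.norm_eq_abs, sq_abs, one_pow, mul_one, Real.norm_eq_abs, sq_abs]
    field_simp
  rw [Finset.sum_congr rfl key, Finset.sum_const, nsmul_eq_mul]
  field_simp
  ring

lemma cost_star_le {N : ℕ} (C : Finset (Sym2 (Fin N))) (hC : C.Nonempty) (v : Fin N)
    (hv : ∀ e ∈ C, v ∈ e) : cost N C ≤ (C.card : ℝ) - 1 := by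
  classical
  set o : Sym2 (Fin N) → Fin N := fun e => if h : v ∈ e then Sym2.Mem.other' h else v with ho
  have hspec : ∀ e ∈ C, s(v, o e) = e := by
    intro e he
    simp only [ho, dif_pos (hv e he)]
    exact Sym2.other_spec' (hv e he)
  have hinj : Set.InjOn o C := by
    intro e1 h1 e2 h2 h
    rw [← hspec e1 h1, ← hspec e2 h2, h]
  set U := C.image o with hU
  have hUcard : U.card = C.card := Finset.card_image_of_injOn hinj
  have hUne : U.Nonempty := hC.image o
  set μ : EuclideanSpace ℝ (Fin N) :=
    (U.card : ℝ)⁻¹ • ∑ w ∈ U, EuclideanSpace.single w (1:ℝ) with hμ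
  set c : EuclideanSpace ℝ (Fin N) := EuclideanSpace.single v 1 + μ with hc
  have hb : BddBelow (Set.range fun c : EuclideanSpace ℝ (Fin N) =>
      ∑ e ∈ C, ‖edgePoint N e - c‖ ^ 2) := by
    refine ⟨0, ?_⟩
    rintro x ⟨c', rfl⟩
    exact Finset.sum_nonneg fun e _ => sq_nonneg _
  refine le_trans (ciInf_le hb c) ?_
  have hterm : ∀ e ∈ C, ‖edgePoint N e - c‖ ^ 2
      = ‖EuclideanSpace.single (o e) (1:ℝ) - μ‖ ^ 2 := by
    intro e he
    have hep : edgePoint N e = EuclideanSpace.single v 1 + EuclideanSpace.single (o e) 1 := by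
      conv_lhs => rw [← hspec e he]
      rfl
    rw [hep, hc, add_sub_add_left_eq_sub]
  rw [Finset.sum_congr rfl hterm]
  have himg : ∑ e ∈ C, ‖EuclideanSpace.single (o e) (1:ℝ) - μ‖ ^ 2
      = ∑ u ∈ U, ‖EuclideanSpace.single u (1:ℝ) - μ‖ ^ 2 := by
    rw [hU, Finset.sum_image (fun x hx y hy h => hinj hx hy h)]
  rw [himg, hμ, sum_sq_dist_mean U hUne, hUcard]

lemma refine_partition {α : Type*} [DecidableEq α] (star : Finset α → Prop)
    (hmono : ∀ p q : Finset α, q ⊆ p → star p → star q) :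
    ∀ (d k : ℕ) (F : Finset α) (P : Finset (Finset α)),
      k - P.card = d → P.card ≤ k → k ≤ F.card →
      (∀ p ∈ P, p.Nonempty) → (∀ p ∈ P, star p) →
      (∀ p ∈ P, ∀ q ∈ P, p ≠ q → Disjoint p q) → P.biUnion id = F →
      ∃ Q : Finset (Finset α), Q.card = k ∧ (∀ p ∈ Q, p.Nonempty) ∧ (∀ p ∈ Q, star p) ∧
        (∀ p ∈ Q, ∀ q ∈ Q, p ≠ q → Disjoint p q) ∧ Q.biUnion id = F := by
  intro d
  induction d with
  | zero =>
    intro k F P hd hPk hkF hne hst hdis hun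
    have hPk' : P.card = k := by omega
    exact ⟨P, hPk', hne, hst, hdis, hun⟩
  | succ d ih =>
    intro k F P hd hPk hkF hne hst hdis hun
    have hlt : P.card < k := by omega
    have hex : ∃ p ∈ P, 2 ≤ p.card := by
      by_contra hcon
      push_neg at hcon
      have hone : ∀ p ∈ P, p.card = 1 := by
        intro p hp
        have h1 := hcon p hp
        have h2 : 1 ≤ p.card := Finset.card_pos.mpr (hne p hp)
        omega
      have hFP : F.card = P.card := by
        have h := Finset.card_biUnion (s := P) (t := id) hdis
        rw [hun] at h
        simp only [id_eq] at h
        rw [h, Finset.sum_congr rfl hone, Finset.sum_const, smul_eq_mul, mul_one]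
      omega
    obtain ⟨p, hp, hp2⟩ := hex
    obtain ⟨a, ha⟩ := hne p hp
    have hPpos : 0 < P.card := Finset.card_pos.mpr ⟨p, hp⟩
    have hp'card : (p.erase a).card = p.card - 1 := Finset.card_erase_of_mem ha
    have hp'ne : (p.erase a).Nonempty := Finset.card_pos.mp (by omega)
    have hp'nep : p.erase a ≠ p := fun h => Finset.notMem_erase a p (by rw [h]; exact ha)
    have hanep : ({a} : Finset α) ≠ p := by
      intro h
      rw [← h] at hp2
      simp at hp2
    have hnotP : ∀ q : Finset α, q ⊆ p → q.Nonempty → q ≠ p → q ∉ P.erase p := by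
      intro q hsub hqne hqnep hmem
      have hqP : q ∈ P := Finset.mem_of_mem_erase hmem
      obtain ⟨b, hb⟩ := hqne
      exact (Finset.disjoint_left.mp (hdis q hqP p hp hqnep) hb) (hsub hb)
    have h1 : p.erase a ∉ P.erase p := hnotP _ (Finset.erase_subset a p) hp'ne hp'nep
    have h2 : ({a} : Finset α) ∉ P.erase p :=
      hnotP _ (Finset.singleton_subset_iff.mpr ha) ⟨a, Finset.mem_singleton_self a⟩ hanep
    have hane' : ({a} : Finset α) ≠ p.erase a := by
      intro h
      exact Finset.notMem_erase a p (h ▸ Finset.mem_singleton_self a)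
    set Q' : Finset (Finset α) := insert {a} (insert (p.erase a) (P.erase p)) with hQ'
    have hmemQ' : ∀ q, q ∈ Q' ↔ q = {a} ∨ q = p.erase a ∨ q ∈ P.erase p := by
      intro q; simp [hQ']
    have hcardQ' : Q'.card = P.card + 1 := by
      rw [hQ', Finset.card_insert_of_notMem (by simp [hane', h2]),
        Finset.card_insert_of_notMem h1, Finset.card_erase_of_mem hp]
      omega
    have hdisj_p : ∀ q ∈ P.erase p, Disjoint p q := fun q hq =>
      hdis p hp q (Finset.mem_of_mem_erase hq) (Finset.ne_of_mem_erase hq).symm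
    have hun' : Q'.biUnion id = F := by
      rw [hQ', Finset.biUnion_insert, Finset.biUnion_insert]
      simp only [id_eq]
      rw [← Finset.union_assoc]
      have hsing : ({a} : Finset α) ∪ p.erase a = p := by
        rw [← Finset.insert_eq, Finset.insert_erase ha]
      rw [hsing]
      have hrest : p ∪ (P.erase p).biUnion id = P.biUnion id := by
        conv_rhs => rw [← Finset.insert_erase hp]
        rw [Finset.biUnion_insert, id_eq]
      rw [hrest, hun]
    refine ih k F Q' (by omega) (by omega) hkF ?_ ?_ ?_ hun'
    · intro q hq
      rcases (hmemQ' q).mp hq with rfl | rfl | hq'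
      · exact ⟨a, Finset.mem_singleton_self a⟩
      · exact hp'ne
      · exact hne q (Finset.mem_of_mem_erase hq')
    · intro q hq
      rcases (hmemQ' q).mp hq with rfl | rfl | hq'
      · exact hmono p _ (Finset.singleton_subset_iff.mpr ha) (hst p hp)
      · exact hmono p _ (Finset.erase_subset a p) (hst p hp)
      · exact hst q (Finset.mem_of_mem_erase hq')
    · intro q1 hq1 q2 hq2 hne12
      rcases (hmemQ' q1).mp hq1 with rfl | rfl | hq1' <;>
        rcases (hmemQ' q2).mp hq2 with rfl | rfl | hq2'
      · exact absurd rfl hne12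
      · exact Finset.disjoint_singleton_left.mpr (Finset.notMem_erase a p)
      · exact Finset.disjoint_singleton_left.mpr
          (fun h => Finset.disjoint_left.mp (hdisj_p q2 hq2') ha h)
      · exact Finset.disjoint_singleton_right.mpr (Finset.notMem_erase a p)
      · exact absurd rfl hne12
      · exact (hdisj_p q2 hq2').mono_left (Finset.erase_subset a p)
      · exact Finset.disjoint_singleton_right.mpr
          (fun h => Finset.disjoint_left.mp (hdisj_p q1 hq1') ha h)
      · exact ((hdisj_p q1 hq1').symm).mono_right (Finset.erase_subset a p)
      · exact hdis q1 (Finset.mem_of_mem_erase hq1') q2 (Finset.mem_of_mem_erase hq2') hne12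

/-- completeness: Let `G` be a 4-regular graph on `n` vertices, with edge
set partitioned into `E1 ∪ E2`, `|E1| = |E2| = n`, such that `(V, E2)` is bipartite,
and let `G'` be obtained by subdividing each edge of `E1` twice; identify the vertices
of `G'` with `{1, …, 3n}` via a graph isomorphism `φ` to a graph `H` on `Fin (3n)`.
If `G` has a vertex cover of size at most `s ≤ n`, then with `k = s + n` the edge set of
`H` admits a partition into `k` parts of total cost at most `3n − s`. -/
theorem statement11 {V : Type*} [Fintype V] [DecidableEq V] (G : SimpleGraph V)
    [DecidableRel G.Adj] (n : ℕ) (hn : Fintype.card V = n)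
    (hreg : G.IsRegularOfDegree 4)
    (E1 E2 : Finset (Sym2 V)) (hdisj : Disjoint E1 E2)
    (hunion : E1 ∪ E2 = G.edgeFinset) (hE1 : E1.card = n) (hE2 : E2.card = n)
    (hbip : ∃ c : V → Bool, ∀ u v : V, s(u, v) ∈ E2 → c u ≠ c v)
    (H : SimpleGraph (Fin (3 * n))) (φ : subdivide G E1 ≃g H)
    (s : ℕ) (hs : s ≤ n)
    (hcover : ∃ S : Finset V, _root_.IsVertexCover G ↑S ∧ S.card ≤ s) :
    ∃ CC : Fin (s + n) → Finset (Sym2 (Fin (3 * n))),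
      (∀ i, (CC i).Nonempty) ∧
      (∀ i j, i ≠ j → Disjoint (CC i) (CC j)) ∧
      (∀ e, e ∈ H.edgeSet ↔ ∃ i, e ∈ CC i) ∧
      ∑ i, cost (3 * n) (CC i) ≤ 3 * (n : ℝ) - s := by
  classical
  obtain ⟨S, hSc, hScard⟩ := hcover
  have hE1sub : ∀ e ∈ E1, e ∈ G.edgeSet := by
    intro e he
    rw [← SimpleGraph.mem_edgeFinset, ← hunion]
    exact Finset.mem_union_left _ he
  have hE2sub : ∀ e ∈ E2, e ∈ G.edgeSet := by
    intro e he
    rw [← SimpleGraph.mem_edgeFinset, ← hunion]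
    exact Finset.mem_union_right _ he
  have hE1nd : ∀ e ∈ E1, ¬ e.IsDiag := fun e he => G.not_isDiag_of_mem_edgeSet (hE1sub e he)
  have hout : ∀ e : Sym2 V, s((Quot.out e).1, (Quot.out e).2) = e := fun e => Quot.out_eq e
  have hpick_mem : ∀ e : Sym2 V, pickS S e ∈ e := by
    intro e
    unfold pickS
    split
    · exact Sym2.out_fst_mem e
    · exact Sym2.out_snd_mem e
  have hpick_S : ∀ e ∈ G.edgeSet, pickS S e ∈ S := by
    intro e he
    unfold pickS
    split
    · assumption
    · next hnot =>
      have hadj : G.Adj (Quot.out e).1 (Quot.out e).2 := by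
        rw [← SimpleGraph.mem_edgeSet, hout e]; exact he
      rcases hSc hadj with h | h
      · exact absurd h hnot
      · exact h
  have hNVadj : ∀ p : NewVert V E1, G.Adj p.val.1 p.val.2 := fun p =>
    (SimpleGraph.mem_edgeSet G).mp (hE1sub _ p.prop.1)
  have hswap_swap : ∀ p : NewVert V E1, swapNV (swapNV p) = p := fun p => Subtype.ext rfl
  have hpair : ∀ p q : NewVert V E1, s(p.val.1, p.val.2) = s(q.val.1, q.val.2) →
      p = q ∨ p = swapNV q := by
    intro p q h
    rw [Sym2.eq_iff] at h
    rcases h with ⟨h1, h2⟩ | ⟨h1, h2⟩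
    · exact Or.inl (Subtype.ext (Prod.ext h1 h2))
    · exact Or.inr (Subtype.ext (Prod.ext h1 h2))
  set F : Finset (Sym2 (V ⊕ NewVert V E1)) :=
    Finset.univ.filter (fun f => f ∈ (subdivide G E1).edgeSet) with hFdef
  have hFmem : ∀ f, f ∈ F ↔ f ∈ (subdivide G E1).edgeSet := by
    intro f; simp [hFdef]
  have hclassify : ∀ f ∈ F, (∃ e ∈ E2, Sym2.map Sum.inl e = f) ∨
      (∃ p : NewVert V E1, s(Sum.inl p.val.1, Sum.inr p) = f) ∨
      (∃ p : NewVert V E1, s(Sum.inr p, Sum.inr (swapNV p)) = f) := by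
    intro f
    induction f using Sym2.ind with
    | _ x y =>
      intro hf
      rw [hFmem, SimpleGraph.mem_edgeSet] at hf
      obtain u | p := x <;> obtain w | q := y
      · obtain ⟨hadj, hnot⟩ := hf
        have hm : s(u, w) ∈ E1 ∪ E2 := by
          rw [hunion, SimpleGraph.mem_edgeFinset]; exact hadj
        have hm2 : s(u, w) ∈ E2 := by
          rcases Finset.mem_union.mp hm with h | h
          · exact absurd h hnot
          · exact h
        exact Or.inl ⟨s(u, w), hm2, by rw [Sym2.map_pair_eq]⟩
      · have hf' : u = q.val.1 := hf
        subst hf'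
        exact Or.inr (Or.inl ⟨q, rfl⟩)
      · have hf' : w = p.val.1 := hf
        subst hf'
        exact Or.inr (Or.inl ⟨p, Sym2.eq_swap⟩)
      · have h1 : p.val.1 = q.val.2 := hf.1
        have h2 : p.val.2 = q.val.1 := hf.2
        have hq : q = swapNV p := Subtype.ext (Prod.ext h2.symm h1.symm)
        exact Or.inr (Or.inr ⟨p, by rw [hq]⟩)
  have hmem0 : ∀ e ∈ E2, Sym2.map Sum.inl e ∈ F := by
    intro e
    induction e using Sym2.ind with
    | _ a b =>
      intro he
      rw [Sym2.map_pair_eq, hFmem, SimpleGraph.mem_edgeSet]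
      exact ⟨(SimpleGraph.mem_edgeSet G).mp (hE2sub _ he),
        fun hc => Finset.disjoint_left.mp hdisj hc he⟩
  have hmem1 : ∀ p : NewVert V E1, s(Sum.inl p.val.1, (Sum.inr p : V ⊕ NewVert V E1)) ∈ F := by
    intro p
    rw [hFmem, SimpleGraph.mem_edgeSet]
    exact rfl
  have hmem2 : ∀ p : NewVert V E1,
      s((Sum.inr p : V ⊕ NewVert V E1), Sum.inr (swapNV p)) ∈ F := by
    intro p
    rw [hFmem, SimpleGraph.mem_edgeSet]
    exact ⟨rfl, rfl⟩
  -- cardinality of NewVert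
  have hNV : Fintype.card (NewVert V E1) = 2 * n := by
    have hfib : ∀ e ∈ E1,
        (Finset.univ.filter (fun p : V × V => s(p.1, p.2) = e)).card = 2 := by
      intro e he
      obtain ⟨a, b, rfl⟩ : ∃ a b, e = s(a, b) :=
        ⟨(Quot.out e).1, (Quot.out e).2, (hout e).symm⟩
      have hab : a ≠ b := fun h => hE1nd _ he (Sym2.mk_isDiag_iff.mpr h)
      have hset : (Finset.univ.filter (fun p : V × V => s(p.1, p.2) = s(a, b)))
          = {(a, b), (b, a)} := by
        ext p
        simp [Sym2.eq_iff, Prod.ext_iff]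
      rw [hset, Finset.card_insert_of_notMem (by simp [Prod.ext_iff, hab]),
        Finset.card_singleton]
    have hT : (Finset.univ.filter (fun p : V × V => s(p.1, p.2) ∈ E1 ∧ p.1 ≠ p.2))
        = E1.biUnion (fun e => Finset.univ.filter (fun p : V × V => s(p.1, p.2) = e)) := by
      ext p
      simp only [Finset.mem_filter, Finset.mem_univ, true_and, Finset.mem_biUnion]
      constructor
      · rintro ⟨h1, _⟩
        exact ⟨s(p.1, p.2), h1, rfl⟩
      · rintro ⟨e, he, heq⟩
        rw [← heq] at he
        exact ⟨he, fun hc => hE1nd _ he (Sym2.mk_isDiag_iff.mpr hc)⟩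
    rw [Fintype.card_subtype, hT, Finset.card_biUnion, Finset.sum_congr rfl hfib,
      Finset.sum_const, smul_eq_mul, hE1, mul_comm]
    intro e1 h1 e2 h2 hne
    rw [Function.onFun, Finset.disjoint_left]
    intro p hp1 hp2
    rw [Finset.mem_filter] at hp1 hp2
    exact hne (hp1.2 ▸ hp2.2)
  -- cardinality of F
  have hFcard : F.card = 4 * n := by
    set F0 := E2.image (Sym2.map (Sum.inl : V → V ⊕ NewVert V E1)) with hF0d
    set F1 := (Finset.univ : Finset (NewVert V E1)).image
      (fun p => s(Sum.inl p.val.1, (Sum.inr p : V ⊕ NewVert V E1))) with hF1d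
    set F2 := (Finset.univ : Finset (NewVert V E1)).image
      (fun p => s((Sum.inr p : V ⊕ NewVert V E1), Sum.inr (swapNV p))) with hF2d
    have hFeq : F = F0 ∪ F1 ∪ F2 := by
      ext f
      constructor
      · intro hf
        rcases hclassify f hf with ⟨e, he, rfl⟩ | ⟨p, rfl⟩ | ⟨p, rfl⟩
        · exact Finset.mem_union_left _ (Finset.mem_union_left _ (Finset.mem_image_of_mem _ he))
        · exact Finset.mem_union_left _
            (Finset.mem_union_right _ (Finset.mem_image_of_mem _ (Finset.mem_univ p)))
        · exact Finset.mem_union_right _ (Finset.mem_image_of_mem _ (Finset.mem_univ p))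
      · intro hf
        rcases Finset.mem_union.mp hf with hf' | hf'
        · rcases Finset.mem_union.mp hf' with hf'' | hf''
          · obtain ⟨e, he, rfl⟩ := Finset.mem_image.mp hf''
            exact hmem0 e he
          · obtain ⟨p, _, rfl⟩ := Finset.mem_image.mp hf''
            exact hmem1 p
        · obtain ⟨p, _, rfl⟩ := Finset.mem_image.mp hf'
          exact hmem2 p
    have hd01 : Disjoint F0 F1 := by
      rw [Finset.disjoint_left]
      intro f h0 h1
      obtain ⟨e, he, rfl⟩ := Finset.mem_image.mp h0
      obtain ⟨p, _, hp⟩ := Finset.mem_image.mp h1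
      obtain ⟨a, b, rfl⟩ : ∃ a b, e = s(a, b) :=
        ⟨(Quot.out e).1, (Quot.out e).2, (hout e).symm⟩
      rw [Sym2.map_pair_eq] at hp
      simp [Sym2.eq_iff] at hp
    have hd02 : Disjoint F0 F2 := by
      rw [Finset.disjoint_left]
      intro f h0 h1
      obtain ⟨e, he, rfl⟩ := Finset.mem_image.mp h0
      obtain ⟨p, _, hp⟩ := Finset.mem_image.mp h1
      obtain ⟨a, b, rfl⟩ : ∃ a b, e = s(a, b) :=
        ⟨(Quot.out e).1, (Quot.out e).2, (hout e).symm⟩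
      rw [Sym2.map_pair_eq] at hp
      simp [Sym2.eq_iff] at hp
    have hd12 : Disjoint F1 F2 := by
      rw [Finset.disjoint_left]
      intro f h0 h1
      obtain ⟨p, _, rfl⟩ := Finset.mem_image.mp h0
      obtain ⟨q, _, hq⟩ := Finset.mem_image.mp h1
      simp [Sym2.eq_iff] at hq
    have hc0 : F0.card = n := by
      rw [hF0d, Finset.card_image_of_injective _ (Sym2.map.injective Sum.inl_injective), hE2]
    have hc1 : F1.card = 2 * n := by
      rw [hF1d, Finset.card_image_of_injective, Finset.card_univ, hNV]
      intro p q h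
      rw [Sym2.eq_iff] at h
      rcases h with ⟨h1, h2⟩ | ⟨h1, h2⟩
      · exact Sum.inr_injective h2
      · exact absurd h1 (by simp)
    have hc2 : F2.card = n := by
      have hfib2 : ∀ f ∈ F2, (Finset.univ.filter (fun p : NewVert V E1 =>
          s((Sum.inr p : V ⊕ NewVert V E1), Sum.inr (swapNV p)) = f)).card = 2 := by
        intro f hf
        obtain ⟨p0, _, rfl⟩ := Finset.mem_image.mp hf
        have hset : (Finset.univ.filter (fun p : NewVert V E1 =>
            s((Sum.inr p : V ⊕ NewVert V E1), Sum.inr (swapNV p))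
              = s(Sum.inr p0, Sum.inr (swapNV p0)))) = {p0, swapNV p0} := by
          ext p
          simp only [Finset.mem_filter, Finset.mem_univ, true_and, Finset.mem_insert,
            Finset.mem_singleton]
          constructor
          · intro h
            rw [Sym2.eq_iff] at h
            rcases h with ⟨h1, _⟩ | ⟨h1, _⟩
            · exact Or.inl (Sum.inr_injective h1)
            · exact Or.inr (Sum.inr_injective h1)
          · rintro (rfl | rfl)
            · rfl
            · rw [hswap_swap, Sym2.eq_swap]
        have hp0ne : p0 ≠ swapNV p0 := by
          intro h
          exact p0.prop.2 (congrArg (fun q => q.val.1) h)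
        rw [hset, Finset.card_insert_of_notMem (by simpa using hp0ne), Finset.card_singleton]
      have hkey : (Finset.univ : Finset (NewVert V E1))
          = F2.biUnion (fun f => Finset.univ.filter (fun p : NewVert V E1 =>
              s((Sum.inr p : V ⊕ NewVert V E1), Sum.inr (swapNV p)) = f)) := by
        ext p
        simp only [Finset.mem_univ, true_iff, Finset.mem_biUnion]
        exact ⟨_, Finset.mem_image_of_mem _ (Finset.mem_univ p),
          Finset.mem_filter.mpr ⟨Finset.mem_univ p, rfl⟩⟩
      have h2card : Fintype.card (NewVert V E1) = 2 * F2.card := by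
        rw [← Finset.card_univ, hkey, Finset.card_biUnion, Finset.sum_congr rfl hfib2,
          Finset.sum_const, smul_eq_mul, mul_comm]
        intro f1 h1 f2 h2 hne
        rw [Function.onFun, Finset.disjoint_left]
        intro p hp1 hp2
        rw [Finset.mem_filter] at hp1 hp2
        exact hne (hp1.2 ▸ hp2.2)
      omega
    rw [hFeq, Finset.card_union_of_disjoint (Finset.disjoint_union_left.mpr ⟨hd02, hd12⟩),
      Finset.card_union_of_disjoint hd01, hc0, hc1, hc2]
    omega
  -- the partition into stars
  set part : (V ⊕ Sym2 V) → Finset (Sym2 (V ⊕ NewVert V E1)) :=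
    fun i => F.filter (fun f => centerS E1 S f = i) with hpartdef
  set I : Finset (V ⊕ Sym2 V) := S.image Sum.inl ∪ E1.image Sum.inr with hIdef
  have hcenter_in : ∀ f ∈ F, centerS E1 S f ∈ I := by
    intro f hf
    rcases hclassify f hf with ⟨e, he, rfl⟩ | ⟨p, rfl⟩ | ⟨p, rfl⟩
    · obtain ⟨a, b, rfl⟩ : ∃ a b, e = s(a, b) :=
        ⟨(Quot.out e).1, (Quot.out e).2, (hout e).symm⟩
      rw [Sym2.map_pair_eq, centerS_mk]
      show Sum.inl (pickS S s(a, b)) ∈ I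
      exact Finset.mem_union_left _ (Finset.mem_image_of_mem _ (hpick_S _ (hE2sub _ he)))
    · rw [centerS_mk]
      show (if p.val.1 ∈ S then Sum.inl p.val.1 else Sum.inr s(p.val.1, p.val.2)) ∈ I
      by_cases hpS : p.val.1 ∈ S
      · rw [if_pos hpS]
        exact Finset.mem_union_left _ (Finset.mem_image_of_mem _ hpS)
      · rw [if_neg hpS]
        exact Finset.mem_union_right _ (Finset.mem_image_of_mem _ p.prop.1)
    · rw [centerS_mk]
      show Sum.inr s(p.val.1, (swapNV p).val.1) ∈ I
      exact Finset.mem_union_right _ (Finset.mem_image_of_mem _ p.prop.1)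
  have hstar : ∀ i ∈ I, ∃ x, ∀ f ∈ part i, x ∈ f := by
    intro i hi
    rw [hIdef, Finset.mem_union] at hi
    rcases hi with hi | hi
    · obtain ⟨w, hwS, rfl⟩ := Finset.mem_image.mp hi
      refine ⟨Sum.inl w, ?_⟩
      intro f hf
      obtain ⟨hfF, hfc⟩ := Finset.mem_filter.mp hf
      rcases hclassify f hfF with ⟨e, he, rfl⟩ | ⟨p, rfl⟩ | ⟨p, rfl⟩
      · obtain ⟨a, b, rfl⟩ : ∃ a b, e = s(a, b) :=
          ⟨(Quot.out e).1, (Quot.out e).2, (hout e).symm⟩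
        rw [Sym2.map_pair_eq, centerS_mk] at hfc
        have hpw : pickS S s(a, b) = w := Sum.inl_injective hfc
        rw [Sym2.map_pair_eq, ← hpw]
        rcases Sym2.mem_iff.mp (hpick_mem s(a, b)) with h | h
        · rw [h]; exact Sym2.mem_mk_left _ _
        · rw [h]; exact Sym2.mem_mk_right _ _
      · rw [centerS_mk] at hfc
        have hfc' : (if p.val.1 ∈ S then Sum.inl p.val.1
            else Sum.inr s(p.val.1, p.val.2)) = Sum.inl w := hfc
        by_cases hpS : p.val.1 ∈ S
        · rw [if_pos hpS] at hfc'
          rw [← Sum.inl_injective hfc']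
          exact Sym2.mem_mk_left _ _
        · rw [if_neg hpS] at hfc'
          exact absurd hfc' (by simp)
      · rw [centerS_mk] at hfc
        have hfc' : (Sum.inr s(p.val.1, (swapNV p).val.1) : V ⊕ Sym2 V) = Sum.inl w := hfc
        exact absurd hfc' (by simp)
    · obtain ⟨e, heE1, rfl⟩ := Finset.mem_image.mp hi
      have hPmem : s((Quot.out e).1, (Quot.out e).2) ∈ E1 := by rw [hout]; exact heE1
      have hPne : (Quot.out e).1 ≠ (Quot.out e).2 := by
        intro h
        exact hE1nd e heE1 (by rw [← hout e]; exact Sym2.mk_isDiag_iff.mpr h)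
      set P : NewVert V E1 := ⟨((Quot.out e).1, (Quot.out e).2), hPmem, hPne⟩ with hPdef
      have hPe : s(P.val.1, P.val.2) = e := hout e
      refine ⟨if P.val.1 ∈ S then Sum.inr (swapNV P) else Sum.inr P, ?_⟩
      intro f hf
      obtain ⟨hfF, hfc⟩ := Finset.mem_filter.mp hf
      rcases hclassify f hfF with ⟨e', he', rfl⟩ | ⟨p, rfl⟩ | ⟨p, rfl⟩
      · obtain ⟨a, b, rfl⟩ : ∃ a b, e' = s(a, b) :=
          ⟨(Quot.out e').1, (Quot.out e').2, (hout e').symm⟩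
        rw [Sym2.map_pair_eq, centerS_mk] at hfc
        exact absurd hfc (by simp [centerFun])
      · rw [centerS_mk] at hfc
        have hfc' : (if p.val.1 ∈ S then Sum.inl p.val.1
            else Sum.inr s(p.val.1, p.val.2)) = Sum.inr e := hfc
        by_cases hpS : p.val.1 ∈ S
        · rw [if_pos hpS] at hfc'
          exact absurd hfc' (by simp)
        · rw [if_neg hpS] at hfc'
          have heq : s(p.val.1, p.val.2) = s(P.val.1, P.val.2) :=
            (Sum.inr_injective hfc').trans hPe.symm
          rcases hpair p P heq with rfl | hpsw
          · rw [if_neg hpS]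
            exact Sym2.mem_mk_right _ _
          · have hP1S : P.val.1 ∈ S := by
              rcases hSc (hNVadj P) with h | h
              · exact h
              · subst hpsw
                exact absurd h hpS
            rw [if_pos hP1S, ← hpsw]
            exact Sym2.mem_mk_right _ _
      · rw [centerS_mk] at hfc
        have hfc' : (Sum.inr s(p.val.1, (swapNV p).val.1) : V ⊕ Sym2 V) = Sum.inr e := hfc
        have heq : s(p.val.1, p.val.2) = s(P.val.1, P.val.2) :=
          (Sum.inr_injective hfc').trans hPe.symm
        rcases hpair p P heq with rfl | hpsw
        · by_cases hpS : P.val.1 ∈ S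
          · rw [if_pos hpS]
            exact Sym2.mem_mk_right _ _
          · rw [if_neg hpS]
            exact Sym2.mem_mk_left _ _
        · subst hpsw
          rw [hswap_swap]
          by_cases hpS : P.val.1 ∈ S
          · rw [if_pos hpS]
            exact Sym2.mem_mk_left _ _
          · rw [if_neg hpS]
            exact Sym2.mem_mk_right _ _
  -- assemble the initial partition
  set P0 : Finset (Finset (Sym2 (V ⊕ NewVert V E1))) :=
    (I.filter (fun i => (part i).Nonempty)).image part with hP0def
  have hP0card : P0.card ≤ s + n := by
    calc P0.card ≤ (I.filter (fun i => (part i).Nonempty)).card := Finset.card_image_le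
    _ ≤ I.card := Finset.card_filter_le _ _
    _ ≤ (S.image Sum.inl).card + (E1.image Sum.inr).card := Finset.card_union_le _ _
    _ ≤ S.card + E1.card := by
        gcongr <;> exact Finset.card_image_le
    _ ≤ s + n := by
        rw [hE1]
        omega
  have hkF : s + n ≤ F.card := by rw [hFcard]; omega
  have hP0ne : ∀ p ∈ P0, p.Nonempty := by
    intro p hp
    obtain ⟨i, hi, rfl⟩ := Finset.mem_image.mp hp
    exact (Finset.mem_filter.mp hi).2
  have hP0star : ∀ p ∈ P0, ∃ x, ∀ f ∈ p, x ∈ f := by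
    intro p hp
    obtain ⟨i, hi, rfl⟩ := Finset.mem_image.mp hp
    exact hstar i (Finset.mem_filter.mp hi).1
  have hP0dis : ∀ p ∈ P0, ∀ q ∈ P0, p ≠ q → Disjoint p q := by
    intro p hp q hq hne
    obtain ⟨i1, _, rfl⟩ := Finset.mem_image.mp hp
    obtain ⟨i2, _, rfl⟩ := Finset.mem_image.mp hq
    have hii : i1 ≠ i2 := fun h => hne (by rw [h])
    rw [Finset.disjoint_left]
    intro f hf1 hf2
    rw [hpartdef] at hf1 hf2
    exact hii ((Finset.mem_filter.mp hf1).2.symm.trans (Finset.mem_filter.mp hf2).2)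
  have hP0un : P0.biUnion id = F := by
    ext f
    constructor
    · intro hf
      obtain ⟨q, hq, hfq⟩ := Finset.mem_biUnion.mp hf
      obtain ⟨i, _, rfl⟩ := Finset.mem_image.mp hq
      exact Finset.filter_subset _ _ hfq
    · intro hf
      have hfi : f ∈ part (centerS E1 S f) := Finset.mem_filter.mpr ⟨hf, rfl⟩
      refine Finset.mem_biUnion.mpr ⟨part (centerS E1 S f), ?_, hfi⟩
      exact Finset.mem_image_of_mem _
        (Finset.mem_filter.mpr ⟨hcenter_in f hf, ⟨f, hfi⟩⟩)
  obtain ⟨Q, hQcard, hQne, hQstar, hQdis, hQun⟩ :=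
    refine_partition (fun C => ∃ x, ∀ f ∈ C, x ∈ f)
      (fun p q hsub hp => hp.imp (fun x hx f hf => hx f (hsub hf)))
      ((s + n) - P0.card) (s + n) F P0 rfl hP0card hkF hP0ne hP0star hP0dis hP0un
  -- transfer along φ
  have hψinj : Function.Injective (Sym2.map ⇑φ) := Sym2.map.injective φ.toEquiv.injective
  have hψF : ∀ f ∈ F, Sym2.map ⇑φ f ∈ H.edgeSet := by
    intro f
    induction f using Sym2.ind with
    | _ x y =>
      intro hf
      rw [hFmem, SimpleGraph.mem_edgeSet] at hf
      rw [Sym2.map_pair_eq, SimpleGraph.mem_edgeSet]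
      exact φ.map_adj_iff.mpr hf
  have hψsymm : ∀ e ∈ H.edgeSet, Sym2.map ⇑φ.symm e ∈ F := by
    intro e
    induction e using Sym2.ind with
    | _ x y =>
      intro he
      rw [SimpleGraph.mem_edgeSet] at he
      rw [Sym2.map_pair_eq, hFmem, SimpleGraph.mem_edgeSet]
      exact φ.symm.map_adj_iff.mpr he
  have hψψ : ∀ e : Sym2 (Fin (3 * n)), Sym2.map ⇑φ (Sym2.map ⇑φ.symm e) = e := by
    intro e
    rw [Sym2.map_map]
    have hco : ⇑φ ∘ ⇑φ.symm = id := funext fun x => φ.apply_symm_apply x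
    rw [hco, Sym2.map_id, id_eq]
  set eqv := Q.equivFinOfCardEq hQcard with heqvdef
  refine ⟨fun i => ((eqv.symm i).val).image (Sym2.map ⇑φ),
    ?_, ?_, ?_, ?_⟩
  · intro i
    exact (hQne _ (eqv.symm i).prop).image _
  · intro i j hij
    have hne' : ((eqv.symm i).val)
        ≠ ((eqv.symm j).val) := by
      intro h
      exact hij (eqv.symm.injective (Subtype.ext h))
    exact (Finset.disjoint_image hψinj).mpr
      (hQdis (eqv.symm i).val (eqv.symm i).prop (eqv.symm j).val (eqv.symm j).prop hne')
  · intro e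
    constructor
    · intro he
      have hf : Sym2.map ⇑φ.symm e ∈ F := hψsymm e he
      rw [← hQun] at hf
      obtain ⟨q, hq, hfq⟩ := Finset.mem_biUnion.mp hf
      refine ⟨eqv ⟨q, hq⟩, ?_⟩
      dsimp only
      rw [Equiv.symm_apply_apply]
      exact Finset.mem_image.mpr ⟨_, hfq, hψψ e⟩
    · rintro ⟨i, hi⟩
      obtain ⟨f, hfq, rfl⟩ := Finset.mem_image.mp hi
      have hfF : f ∈ F := by
        rw [← hQun]
        exact Finset.mem_biUnion.mpr ⟨_, (eqv.symm i).prop, hfq⟩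
      exact hψF f hfF
  · have hcardCC : ∀ i, (((eqv.symm i).val).image (Sym2.map ⇑φ)).card
        = ((eqv.symm i).val).card :=
      fun i => Finset.card_image_of_injective _ hψinj
    have hcost : ∀ i : Fin (s + n),
        cost (3 * n) (((eqv.symm i).val).image (Sym2.map ⇑φ))
        ≤ ((((eqv.symm i).val).image (Sym2.map ⇑φ)).card : ℝ) - 1 := by
      intro i
      obtain ⟨x, hx⟩ := hQstar _ (eqv.symm i).prop
      refine cost_star_le _ ((hQne _ (eqv.symm i).prop).image _) (φ x) ?_
      intro e' he'
      obtain ⟨f, hf, rfl⟩ := Finset.mem_image.mp he'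
      exact Sym2.mem_map.mpr ⟨x, hx f hf, rfl⟩
    calc ∑ i, cost (3 * n) (((eqv.symm i).val).image (Sym2.map ⇑φ))
        ≤ ∑ i : Fin (s + n),
          (((((eqv.symm i).val).image (Sym2.map ⇑φ)).card : ℝ) - 1) :=
          Finset.sum_le_sum (fun i _ => hcost i)
      _ = (∑ i : Fin (s + n), (((eqv.symm i).val).card : ℝ))
          - (s + n) := by
          rw [Finset.sum_sub_distrib, Finset.sum_const, Finset.card_univ, Fintype.card_fin,
            nsmul_eq_mul, mul_one]
          congr 1
          · exact Finset.sum_congr rfl (fun i _ => by rw [hcardCC i])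
          · push_cast
            ring
      _ = ((F.card : ℝ)) - (s + n) := by
          congr 1
          have hsum : ∑ i : Fin (s + n), (((eqv.symm i).val).card : ℝ)
              = ∑ q : {x // x ∈ Q}, ((q.val.card : ℝ)) :=
            Equiv.sum_comp eqv.symm (fun q : {x // x ∈ Q} => ((q.val.card : ℝ)))
          rw [hsum, Finset.sum_coe_sort Q (fun q => ((q.card : ℝ)))]
          have hcardsum : ∑ q ∈ Q, q.card = F.card := by
            rw [← hQun]
            have h := Finset.card_biUnion (s := Q) (t := id) hQdis
            simp only [id_eq] at h
            rw [h]
          rw [← hcardsum]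
          push_cast
          rfl
      _ ≤ 3 * (n : ℝ) - s := by
          rw [hFcard]
          push_cast
          ring_nf
          linarith
end
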